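/- Suppose there exist an integer n ≥ 0 and a positive integer m such that σ^n(x) = σ^{n+m}(x). Then x is rational, and moreover, writing P = q_{n+1} q_{n+2} ⋯ q_{n+m}, one has σ^n(x) = (P/(P − 1)) · Σ_{k=n+1}^{n+m} ε_k/(q_{n+1} q_{n+2} ⋯ q_k). -/

import Mathlib

/-- The `n`-th shift `σ^n(x) = Σ_{k=n+1}^∞ ε_k/(q_{n+1} q_{n+2} ⋯ q_k)` of the Cantor
series with bases `q` and digits `ε`; in particular `σ^0(x) = x`. -/
noncomputable def cantorShift (q ε : ℕ → ℕ) (n : ℕ) : ℝ :=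
  ∑' k : ℕ, (ε (n + k + 1) : ℝ) / ∏ i ∈ Finset.Icc (n + 1) (n + k + 1), (q i : ℝ)

private lemma two_pow_le_prod (q : ℕ → ℕ) (hq : ∀ k, 1 ≤ k → 2 ≤ q k) (a b : ℕ) :
    (2:ℝ) ^ (b - a) ≤ ∏ i ∈ Finset.Icc (a+1) b, (q i : ℝ) := by
  rw [show b - a = (Finset.Icc (a+1) b).card by rw [Nat.card_Icc]; omega]
  rw [← Finset.prod_const]
  apply Finset.prod_le_prod (by intros; norm_num)
  intro i hi
  simp only [Finset.mem_Icc] at hi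
  exact_mod_cast hq i (by omega)

private lemma prod_pos' (q : ℕ → ℕ) (hq : ∀ k, 1 ≤ k → 2 ≤ q k) (a b : ℕ) :
    (0:ℝ) < ∏ i ∈ Finset.Icc (a+1) b, (q i : ℝ) :=
  lt_of_lt_of_le (by positivity) (two_pow_le_prod q hq a b)

private lemma cantor_summable (q ε : ℕ → ℕ) (hq : ∀ k, 1 ≤ k → 2 ≤ q k)
    (hε : ∀ k, 1 ≤ k → ε k ≤ q k - 1) (n : ℕ) :
    Summable (fun k : ℕ =>
      (ε (n + k + 1) : ℝ) / ∏ i ∈ Finset.Icc (n + 1) (n + k + 1), (q i : ℝ)) := by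
  refine Summable.of_nonneg_of_le ?_ ?_
    (summable_geometric_of_lt_one (r := (1/2:ℝ)) (by norm_num) (by norm_num))
  · intro k
    have := prod_pos' q hq n (n + k + 1)
    positivity
  · intro k
    have hsplit : ∏ i ∈ Finset.Icc (n+1) (n+k+1), (q i : ℝ)
        = (∏ i ∈ Finset.Icc (n+1) (n+k), (q i : ℝ)) * (q (n+k+1) : ℝ) := by
      rw [Finset.prod_Icc_succ_top (by omega : n + 1 ≤ n + k + 1)]
    have hQ : (2:ℝ)^k ≤ ∏ i ∈ Finset.Icc (n+1) (n+k), (q i : ℝ) := by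
      have := two_pow_le_prod q hq n (n+k)
      simpa using this
    have hQpos : (0:ℝ) < ∏ i ∈ Finset.Icc (n+1) (n+k), (q i : ℝ) := prod_pos' q hq n (n+k)
    have hql : (2:ℝ) ≤ (q (n+k+1) : ℝ) := by exact_mod_cast hq (n+k+1) (by omega)
    have hεq : (ε (n+k+1) : ℝ) ≤ (q (n+k+1) : ℝ) := by
      have := hε (n+k+1) (by omega)
      have := hq (n+k+1) (by omega)
      exact_mod_cast by omega
    calc (ε (n + k + 1) : ℝ) / ∏ i ∈ Finset.Icc (n + 1) (n + k + 1), (q i : ℝ)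
        ≤ (q (n+k+1) : ℝ) / ((∏ i ∈ Finset.Icc (n+1) (n+k), (q i : ℝ)) * (q (n+k+1) : ℝ)) := by
          rw [hsplit]; gcongr
      _ = 1 / ∏ i ∈ Finset.Icc (n+1) (n+k), (q i : ℝ) := by
          rw [mul_comm]
          field_simp
      _ ≤ 1 / (2:ℝ)^k := by
          apply one_div_le_one_div_of_le (by positivity) hQ
      _ = (1/2:ℝ)^k := by rw [div_pow, one_pow]

private lemma cantor_rec (q ε : ℕ → ℕ) (hq : ∀ k, 1 ≤ k → 2 ≤ q k)
    (hε : ∀ k, 1 ≤ k → ε k ≤ q k - 1) (n m : ℕ) :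
    cantorShift q ε n =
      (∑ k ∈ Finset.range m,
        (ε (n + k + 1) : ℝ) / ∏ i ∈ Finset.Icc (n + 1) (n + k + 1), (q i : ℝ))
      + (1 / ∏ i ∈ Finset.Icc (n + 1) (n + m), (q i : ℝ)) * cantorShift q ε (n + m) := by
  have hs := cantor_summable q ε hq hε n
  unfold cantorShift
  rw [← Summable.sum_add_tsum_nat_add m hs]
  congr 1
  rw [← tsum_mul_left]
  apply tsum_congr
  intro k
  have h1 : n + (k + m) + 1 = n + m + k + 1 := by ring
  rw [h1]
  have hsplit : ∏ i ∈ Finset.Icc (n+1) (n+m+k+1), (q i : ℝ)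
      = (∏ i ∈ Finset.Icc (n+1) (n+m), (q i : ℝ))
        * ∏ i ∈ Finset.Icc (n+m+1) (n+m+k+1), (q i : ℝ) := by
    rw [Finset.Icc_add_one_left_eq_Ioc, Finset.Icc_add_one_left_eq_Ioc, Finset.Icc_add_one_left_eq_Ioc]
    exact (Finset.prod_Ioc_consecutive _ (by omega : n ≤ n + m)
      (by omega : n + m ≤ n + m + k + 1)).symm
  rw [hsplit]
  ring

/-- if `σ^n(x) = σ^{n+m}(x)` for some `n ≥ 0`, `m ≥ 1`, then `x` is
rational and, with `P = q_{n+1} ⋯ q_{n+m}`,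
`σ^n(x) = (P/(P-1)) · Σ_{k=n+1}^{n+m} ε_k/(q_{n+1} ⋯ q_k)`. -/
theorem cantor_shift_eq_imp_rational
    (q : ℕ → ℕ) (hq : ∀ k, 1 ≤ k → 2 ≤ q k)
    (ε : ℕ → ℕ) (hε : ∀ k, 1 ≤ k → ε k ≤ q k - 1)
    (x : ℝ) (hx : x = cantorShift q ε 0)
    (n m : ℕ) (hm : 0 < m)
    (heq : cantorShift q ε n = cantorShift q ε (n + m)) :
    (∃ a : ℚ, x = (a : ℝ)) ∧
    cantorShift q ε n =
      ((∏ i ∈ Finset.Icc (n + 1) (n + m), (q i : ℝ)) /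
        ((∏ i ∈ Finset.Icc (n + 1) (n + m), (q i : ℝ)) - 1)) *
      ∑ k ∈ Finset.Icc (n + 1) (n + m),
        (ε k : ℝ) / ∏ i ∈ Finset.Icc (n + 1) k, (q i : ℝ) := by
  set P : ℝ := ∏ i ∈ Finset.Icc (n + 1) (n + m), (q i : ℝ) with hPdef
  have hP2 : (2:ℝ)^m ≤ P := by
    have := two_pow_le_prod q hq n (n+m)
    simpa using this
  have hP1 : 1 < P := by
    have : (1:ℝ) < 2^m := one_lt_pow₀ (by norm_num) (by omega)
    linarith
  have hPne : P - 1 ≠ 0 := by linarith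
  have hPne0 : P ≠ 0 := by linarith
  -- convert the Icc sum to a range sum
  have hS : (∑ k ∈ Finset.Icc (n + 1) (n + m),
        (ε k : ℝ) / ∏ i ∈ Finset.Icc (n + 1) k, (q i : ℝ))
      = ∑ k ∈ Finset.range m,
        (ε (n + k + 1) : ℝ) / ∏ i ∈ Finset.Icc (n + 1) (n + k + 1), (q i : ℝ) := by
    rw [← Finset.Ico_add_one_right_eq_Icc, Finset.sum_Ico_eq_sum_range]
    rw [show n + m + 1 - (n + 1) = m by omega]
    apply Finset.sum_congr rfl
    intro i _
    rw [show n + 1 + i = n + i + 1 by ring]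
  have hrec := cantor_rec q ε hq hε n m
  rw [← heq] at hrec
  have hmain : cantorShift q ε n =
      (P / (P - 1)) * ∑ k ∈ Finset.Icc (n + 1) (n + m),
        (ε k : ℝ) / ∏ i ∈ Finset.Icc (n + 1) k, (q i : ℝ) := by
    rw [hS]
    rw [← hPdef] at hrec
    field_simp at hrec ⊢
    linarith [hrec]
  refine ⟨?_, hmain⟩
  -- rationality
  have hrec0 := cantor_rec q ε hq hε 0 n
  simp only [zero_add] at hrec0
  refine ⟨(∑ k ∈ Finset.range n,
      (ε (k + 1) : ℚ) / ∏ i ∈ Finset.Icc 1 (k + 1), (q i : ℚ))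
    + (1 / ∏ i ∈ Finset.Icc 1 n, (q i : ℚ)) *
      (((∏ i ∈ Finset.Icc (n + 1) (n + m), (q i : ℚ)) /
        ((∏ i ∈ Finset.Icc (n + 1) (n + m), (q i : ℚ)) - 1)) *
      ∑ k ∈ Finset.Icc (n + 1) (n + m),
        (ε k : ℚ) / ∏ i ∈ Finset.Icc (n + 1) k, (q i : ℚ)), ?_⟩
  rw [hx, hrec0, hmain]
  push_cast
  ring
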